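/- arXiv:2204.00038 — 7 statements merged into one kernel-verified Lean document; each statement's English description precedes it below -/
import Mathlib

section
/- Let n ≥ 1, α ∈ ℝⁿ with αᵢ > 0 for all i, and β ∈ ℝⁿ with 0 < βᵢ < 1 for all i. Define ᾱᵢ = √(αᵢ/∑ⱼ αⱼ), β̄ᵢ = √βᵢ, C = diag(ᾱ) diag(β̄)⁻¹, and ζᵢ = ᾱᵢ β̄ᵢ. Then C⁻¹ (diag(β) - 2αβᵀ/∑ⱼαⱼ) C = diag(β) - 2 ζζᵀ and C⁻¹ (diag(β) - αβᵀ/∑ⱼαⱼ) C = diag(β) - ζζᵀ; in particular both conjugated matrices are symmetric. -/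
open Matrix

theorem stmt1 (n : ℕ) (hn : 0 < n) (α β : Fin n → ℝ)
    (hα : ∀ i, 0 < α i) (hβ : ∀ i, 0 < β i ∧ β i < 1)
    (abar : Fin n → ℝ) (habar : ∀ i, abar i = Real.sqrt (α i / ∑ j, α j))
    (bbar : Fin n → ℝ) (hbbar : ∀ i, bbar i = Real.sqrt (β i))
    (C : Matrix (Fin n) (Fin n) ℝ)
    (hC : C = Matrix.diagonal abar * (Matrix.diagonal bbar)⁻¹)
    (ζ : Fin n → ℝ) (hζ : ∀ i, ζ i = abar i * bbar i) :
    C⁻¹ * (Matrix.diagonal β - (2 / ∑ j, α j) • Matrix.vecMulVec α β) * C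
        = Matrix.diagonal β - (2 : ℝ) • Matrix.vecMulVec ζ ζ ∧
    C⁻¹ * (Matrix.diagonal β - (∑ j, α j)⁻¹ • Matrix.vecMulVec α β) * C
        = Matrix.diagonal β - Matrix.vecMulVec ζ ζ ∧
    (Matrix.diagonal β - (2 : ℝ) • Matrix.vecMulVec ζ ζ).IsSymm ∧
    (Matrix.diagonal β - Matrix.vecMulVec ζ ζ).IsSymm := by
  have hne : Nonempty (Fin n) := ⟨⟨0, hn⟩⟩
  have hS : 0 < ∑ j, α j := Finset.sum_pos (fun i _ => hα i) Finset.univ_nonempty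
  have hSne : (∑ j, α j) ≠ 0 := ne_of_gt hS
  have hapos : ∀ i, 0 < abar i := fun i => by
    rw [habar]; exact Real.sqrt_pos.2 (div_pos (hα i) hS)
  have hbpos : ∀ i, 0 < bbar i := fun i => by
    rw [hbbar]; exact Real.sqrt_pos.2 (hβ i).1
  have ha2 : ∀ i, abar i * abar i = α i / (∑ j, α j) := fun i => by
    rw [habar]; exact Real.mul_self_sqrt (div_pos (hα i) hS).le
  have hb2 : ∀ i, bbar i * bbar i = β i := fun i => by
    rw [hbbar]; exact Real.mul_self_sqrt (hβ i).1.le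
  have hbinv : (Matrix.diagonal bbar)⁻¹ = Matrix.diagonal (fun i => (bbar i)⁻¹) := by
    apply Matrix.inv_eq_right_inv
    rw [Matrix.diagonal_mul_diagonal]
    ext i j
    rcases eq_or_ne i j with rfl | h
    · simp [mul_inv_cancel₀ (hbpos i).ne']
    · simp [Matrix.diagonal_apply_ne _ h, Matrix.one_apply_ne h]
  have hCd : C = Matrix.diagonal (fun i => abar i * (bbar i)⁻¹) := by
    rw [hC, hbinv, Matrix.diagonal_mul_diagonal]
  have hCinv : C⁻¹ = Matrix.diagonal (fun i => bbar i * (abar i)⁻¹) := by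
    rw [hCd]
    apply Matrix.inv_eq_right_inv
    rw [Matrix.diagonal_mul_diagonal]
    ext i j
    rcases eq_or_ne i j with rfl | h
    · have : abar i * (bbar i)⁻¹ * (bbar i * (abar i)⁻¹) = 1 := by
        have h1 := (hapos i).ne'
        have h2 := (hbpos i).ne'
        field_simp
      simp [this]
    · simp [Matrix.diagonal_apply_ne _ h, Matrix.one_apply_ne h]
  have key : ∀ c : ℝ, C⁻¹ * (Matrix.diagonal β - c • Matrix.vecMulVec α β) * C
      = Matrix.diagonal β - (c * ∑ j, α j) • Matrix.vecMulVec ζ ζ := by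
    intro c
    rw [hCinv, hCd]
    ext i j
    have hαi : α i = (∑ j, α j) * (abar i * abar i) := by
      rw [ha2]; field_simp
    have hβj : β j = bbar j * bbar j := (hb2 j).symm
    rcases eq_or_ne i j with rfl | hij
    · rw [Matrix.mul_diagonal, Matrix.diagonal_mul]
      simp only [Matrix.sub_apply, Matrix.smul_apply, Matrix.vecMulVec_apply,
        Matrix.diagonal_apply_eq, smul_eq_mul, hζ]
      rw [hαi, hβj]
      have h1 := (hapos i).ne'
      have h2 := (hbpos i).ne'
      field_simp
    · rw [Matrix.mul_diagonal, Matrix.diagonal_mul]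
      simp only [Matrix.sub_apply, Matrix.smul_apply, Matrix.vecMulVec_apply,
        Matrix.diagonal_apply_ne _ hij, smul_eq_mul, hζ]
      rw [hαi, hβj]
      have h1 := (hapos i).ne'
      have h2 := (hbpos j).ne'
      field_simp
      ring
  have hsym : ∀ k : ℝ, (Matrix.diagonal β - k • Matrix.vecMulVec ζ ζ).IsSymm := by
    intro k
    have h1 : (Matrix.vecMulVec ζ ζ)ᵀ = Matrix.vecMulVec ζ ζ := by
      ext i j; simp [Matrix.vecMulVec_apply, mul_comm]
    unfold Matrix.IsSymm
    rw [Matrix.transpose_sub, Matrix.transpose_smul, h1, Matrix.diagonal_transpose]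
  refine ⟨?_, ?_, hsym 2, by simpa using hsym 1⟩
  · have := key (2 / ∑ j, α j)
    rw [div_mul_cancel₀ _ hSne] at this
    exact this
  · have := key (∑ j, α j)⁻¹
    rw [inv_mul_cancel₀ hSne] at this
    simpa using this
end

section
/- Let n ≥ 1, λ > 0, α ∈ ℝⁿ with αᵢ > 0, β ∈ ℝⁿ with 0 < βᵢ < 1, and define A₁ = diag(β) - 2αβᵀ/∑ⱼαⱼ, B₁ = 2λα/∑ⱼαⱼ. Then u_con ∈ ℝⁿ defined by (u_con)ᵢ = αᵢ T* /(1-βᵢ) with T* = 2λ / ∑ⱼ ((1+βⱼ)/(1-βⱼ)) αⱼ is the unique fixed point of the affine map u ↦ A₁ u + B₁. -/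
open Matrix

theorem stmt4 (n : ℕ) (hn : 0 < n) (lam : ℝ) (hlam : 0 < lam)
    (α β : Fin n → ℝ) (hα : ∀ i, 0 < α i) (hβ : ∀ i, 0 < β i ∧ β i < 1)
    (A₁ : Matrix (Fin n) (Fin n) ℝ)
    (hA₁ : A₁ = Matrix.diagonal β - (2 / ∑ j, α j) • Matrix.vecMulVec α β)
    (B₁ : Fin n → ℝ) (hB₁ : ∀ i, B₁ i = 2 * lam * α i / ∑ j, α j)
    (Tstar : ℝ) (hT : Tstar = 2 * lam / ∑ j, ((1 + β j) / (1 - β j)) * α j)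
    (ucon : Fin n → ℝ) (hu : ∀ i, ucon i = α i * Tstar / (1 - β i)) :
    ucon = A₁.mulVec ucon + B₁ ∧ ∀ v : Fin n → ℝ, v = A₁.mulVec v + B₁ → v = ucon := by
  have hne : (Finset.univ : Finset (Fin n)).Nonempty := by
    exact Finset.univ_nonempty_iff.mpr (Fin.pos_iff_nonempty.mp hn)
  set S : ℝ := ∑ j, α j with hSdef
  set D : ℝ := ∑ j, ((1 + β j) / (1 - β j)) * α j with hDdef
  have hS : 0 < S := Finset.sum_pos (fun i _ => hα i) hne
  have hβne : ∀ i, 1 - β i ≠ 0 := fun i => by have := (hβ i).2; linarith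
  have hD : 0 < D := by
    apply Finset.sum_pos (fun i _ => ?_) hne
    have h1 := (hβ i).1; have h2 := (hβ i).2
    have : 0 < (1 + β i) / (1 - β i) := div_pos (by linarith) (by linarith)
    exact mul_pos this (hα i)
  set E : ℝ := ∑ j, β j * α j / (1 - β j) with hEdef
  have hDE : D = S + 2 * E := by
    rw [hDdef, hSdef, hEdef, Finset.mul_sum, ← Finset.sum_add_distrib]
    apply Finset.sum_congr rfl
    intro j _
    have h1 := hβne j
    field_simp
    ring
  have hmv : ∀ (u : Fin n → ℝ) (i : Fin n),
      A₁.mulVec u i = β i * u i - 2 / S * (α i * ∑ j, β j * u j) := by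
    intro u i
    rw [hA₁]
    simp only [Matrix.mulVec, dotProduct, Matrix.sub_apply, Matrix.smul_apply,
      Matrix.vecMulVec_apply, Matrix.diagonal_apply, sub_mul, smul_eq_mul,
      Finset.sum_sub_distrib]
    congr 1
    · simp [Finset.sum_ite_eq]
    · rw [Finset.mul_sum, Finset.mul_sum]
      apply Finset.sum_congr rfl
      intro j _
      ring
  have hTD : Tstar * D = 2 * lam := by
    rw [hT]; field_simp
  -- sum of β j * ucon j
  have hEu : (∑ j, β j * ucon j) = Tstar * E := by
    rw [hEdef, Finset.mul_sum]
    apply Finset.sum_congr rfl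
    intro j _
    rw [hu j]
    field_simp
  have hfix : ucon = A₁.mulVec ucon + B₁ := by
    funext i
    have h1 := hβne i
    rw [Pi.add_apply, hmv, hB₁, hEu, hu i]
    field_simp
    linear_combination (α i * (1 - β i)) * hTD - (α i * (1 - β i) * Tstar) * hDE
  refine ⟨hfix, fun v hv => ?_⟩
  set c : ℝ := ∑ j, β j * v j with hcdef
  have hvi : ∀ i, v i = 2 * α i * (lam - c) / (S * (1 - β i)) := by
    intro i
    have h := congrFun hv i
    rw [Pi.add_apply, hmv, hB₁, ← hcdef] at h
    have h1 := hβne i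
    rw [eq_div_iff (mul_ne_zero hS.ne' h1)]
    field_simp at h
    linear_combination h
  have hc : c * D = 2 * lam * E := by
    have : c = 2 * (lam - c) / S * E := by
      rw [hcdef, hEdef, Finset.mul_sum]
      apply Finset.sum_congr rfl
      intro j _
      rw [hvi j]
      have h1 := hβne j
      field_simp
      ring
    rw [hDE]
    field_simp at this
    linarith [this]
  have hlamc : (lam - c) * D = lam * S := by
    nlinarith [hDE]
  funext i
  rw [hvi i, hu i, hT]
  have h1 := hβne i
  field_simp
  linear_combination (α i) * hlamc
end

section
/- Let n ≥ 1, λ > 0, φ > 1, α ∈ ℝⁿ with αᵢ > 0, β ∈ ℝⁿ with 0 < βᵢ < 1, and define A₂ = diag(β) - αβᵀ/∑ⱼαⱼ, B₂ = φλα/∑ⱼαⱼ. Then the vector ũ with ũᵢ = αᵢ T₂* /(1-βᵢ), where T₂* = φλ / (∑ⱼαⱼ + ∑ⱼ (βⱼ/(1-βⱼ))αⱼ), satisfies ũ = A₂ ũ + B₂. -/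
open Matrix

theorem stmt5 (n : ℕ) (hn : 0 < n) (lam φ : ℝ) (hlam : 0 < lam) (hφ : 1 < φ)
    (α β : Fin n → ℝ) (hα : ∀ i, 0 < α i) (hβ : ∀ i, 0 < β i ∧ β i < 1)
    (A₂ : Matrix (Fin n) (Fin n) ℝ)
    (hA₂ : A₂ = Matrix.diagonal β - (∑ j, α j)⁻¹ • Matrix.vecMulVec α β)
    (B₂ : Fin n → ℝ) (hB₂ : ∀ i, B₂ i = φ * lam * α i / ∑ j, α j)
    (T₂ : ℝ) (hT₂ : T₂ = φ * lam / ((∑ j, α j) + ∑ j, (β j / (1 - β j)) * α j))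
    (utld : Fin n → ℝ) (hu : ∀ i, utld i = α i * T₂ / (1 - β i)) :
    utld = A₂.mulVec utld + B₂ := by
  set S := ∑ j, α j with hS
  set E := ∑ j, (β j / (1 - β j)) * α j with hE
  have hSpos : 0 < S := Finset.sum_pos (fun i _ => hα i) (by simp [Finset.univ_nonempty_iff, Fin.pos_iff_nonempty.mp hn])
  have hEpos : 0 ≤ E := Finset.sum_nonneg fun i _ => le_of_lt
    (mul_pos (div_pos (hβ i).1 (by linarith [(hβ i).2])) (hα i))
  have hD : S + E ≠ 0 := by linarith
  have h1β : ∀ i, (1 : ℝ) - β i ≠ 0 := fun i => by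
    have := (hβ i).2; linarith
  -- key sum identity: ∑ β j * utld j = T₂ * E
  have hsum : ∑ j, β j * utld j = T₂ * E := by
    rw [hE, Finset.mul_sum]
    refine Finset.sum_congr rfl fun j _ => ?_
    rw [hu j]
    field_simp
  have hT : T₂ * (S + E) = φ * lam := by
    rw [hT₂]; field_simp
  funext i
  have hdiag : (Matrix.diagonal β).mulVec utld i = β i * utld i := by
    simp [Matrix.mulVec_diagonal]
  have hvm : ((∑ j, α j)⁻¹ • Matrix.vecMulVec α β).mulVec utld i
      = S⁻¹ * (α i * ∑ j, β j * utld j) := by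
    simp only [Matrix.mulVec, dotProduct, Matrix.smul_apply, Matrix.vecMulVec_apply,
      smul_eq_mul, ← hS, Finset.mul_sum]
    refine Finset.sum_congr rfl fun j _ => ?_
    ring
  rw [hA₂, Pi.add_apply, Matrix.sub_mulVec, Pi.sub_apply, hdiag, hvm, hsum, hB₂, hu i]
  have hrest : S⁻¹ * (α i * (T₂ * E)) = α i * T₂ * E / S := by ring
  rw [hrest]
  field_simp [h1β i]
  linear_combination (α i * (1 - β i)) * hT
end

section
/- Let n ≥ 1, λ > 0, α ∈ ℝⁿ with αᵢ > 0, β ∈ ℝⁿ with 0 < βᵢ < 1, and suppose φ satisfies 1 + (∑ᵢ αᵢ)/(∑ᵢ ((1+βᵢ)/(1-βᵢ)) αᵢ) = φ. Then the fixed points of the two affine maps u ↦ A₁u + B₁ and u ↦ A₂u + B₂ coincide and equal u_con with (u_con)ᵢ = αᵢ T*/(1-βᵢ), T* = 2λ/∑ⱼ((1+βⱼ)/(1-βⱼ))αⱼ, where A₁ = diag(β) - 2αβᵀ/∑ⱼαⱼ, B₁ = 2λα/∑ⱼαⱼ, A₂ = diag(β) - αβᵀ/∑ⱼαⱼ, B₂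 = φλα/∑ⱼαⱼ. -/
open Matrix

theorem stmt6 (n : ℕ) (hn : 0 < n) (lam φ : ℝ) (hlam : 0 < lam)
    (α β : Fin n → ℝ) (hα : ∀ i, 0 < α i) (hβ : ∀ i, 0 < β i ∧ β i < 1)
    (hφ : 1 + (∑ i, α i) / (∑ i, ((1 + β i) / (1 - β i)) * α i) = φ)
    (A₁ A₂ : Matrix (Fin n) (Fin n) ℝ)
    (hA₁ : A₁ = Matrix.diagonal β - (2 / ∑ j, α j) • Matrix.vecMulVec α β)
    (hA₂ : A₂ = Matrix.diagonal β - (∑ j, α j)⁻¹ • Matrix.vecMulVec α β)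
    (B₁ B₂ : Fin n → ℝ)
    (hB₁ : ∀ i, B₁ i = 2 * lam * α i / ∑ j, α j)
    (hB₂ : ∀ i, B₂ i = φ * lam * α i / ∑ j, α j)
    (Tstar : ℝ) (hT : Tstar = 2 * lam / ∑ j, ((1 + β j) / (1 - β j)) * α j)
    (ucon : Fin n → ℝ) (hu : ∀ i, ucon i = α i * Tstar / (1 - β i)) :
    ucon = A₁.mulVec ucon + B₁ ∧ ucon = A₂.mulVec ucon + B₂ ∧
    (∀ v : Fin n → ℝ, v = A₁.mulVec v + B₁ → v = ucon) ∧
    (∀ v : Fin n → ℝ, v = A₂.mulVec v + B₂ → v = ucon) := by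
  have _inst : Nonempty (Fin n) := ⟨⟨0, hn⟩⟩
  have hne : (Finset.univ : Finset (Fin n)).Nonempty := Finset.univ_nonempty
  have hb : ∀ i, (0:ℝ) < 1 - β i := fun i => by linarith [(hβ i).2]
  set S := ∑ j, α j with hSd
  set D := ∑ j, ((1 + β j) / (1 - β j)) * α j with hDd
  set M := ∑ j, β j * α j / (1 - β j) with hMd
  have hS : 0 < S := Finset.sum_pos (fun i _ => hα i) hne
  have hD : 0 < D := Finset.sum_pos (fun i _ => by
    have := hb i; have := (hβ i).1; have := hα i; positivity) hne
  have hM : 0 < M := Finset.sum_pos (fun i _ => by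
    have := hb i; have := (hβ i).1; have := hα i; positivity) hne
  have hDSM : D = S + 2 * M := by
    rw [hDd, hSd, hMd, Finset.mul_sum, ← Finset.sum_add_distrib]
    refine Finset.sum_congr rfl fun i _ => ?_
    have := (hb i).ne'
    field_simp
    ring
  have hTD : Tstar * D = 2 * lam := by
    rw [hT]; field_simp
  have hT2 : Tstar * (S + 2 * M) = 2 * lam := by rw [← hDSM]; exact hTD
  have hφD : φ * D = D + S := by
    field_simp [hD.ne'] at hφ
    linarith [hφ]
  have hphl : φ * lam = Tstar * (S + M) := by
    have h : φ * lam * D = Tstar * (S + M) * D := by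
      linear_combination lam * hφD - (S + M) * hTD + lam * hDSM
    exact mul_right_cancel₀ hD.ne' h
  -- mulVec formula
  have hmul : ∀ (c : ℝ) (u : Fin n → ℝ) (i : Fin n),
      ((Matrix.diagonal β - c • Matrix.vecMulVec α β).mulVec u) i
        = β i * u i - c * (α i * ∑ j, β j * u j) := by
    intro c u i
    rw [Matrix.sub_mulVec]
    simp only [Pi.sub_apply, Matrix.mulVec_diagonal]
    congr 1
    rw [Matrix.smul_mulVec]
    simp only [Pi.smul_apply, smul_eq_mul]
    congr 1
    simp only [Matrix.mulVec, dotProduct, Matrix.vecMulVec_apply]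
    rw [Finset.mul_sum]
    exact Finset.sum_congr rfl fun j _ => by ring
  have hbu : ∑ j, β j * ucon j = Tstar * M := by
    rw [hMd, Finset.mul_sum]
    exact Finset.sum_congr rfl fun j _ => by rw [hu j]; ring
  -- fixed point 1
  have fp1 : ucon = A₁.mulVec ucon + B₁ := by
    funext i
    have e1 : (2:ℝ) * lam = Tstar * S + 2 * (Tstar * M) := by linarith [hT2]
    rw [Pi.add_apply, hA₁, hmul, hbu, hB₁ i, hu i, e1]
    have h1 := (hb i).ne'
    field_simp
    ring
  have fp2 : ucon = A₂.mulVec ucon + B₂ := by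
    funext i
    have e2 : φ * lam = Tstar * S + Tstar * M := by linarith [hphl]
    rw [Pi.add_apply, hA₂, hmul, hbu, hB₂ i, hu i, e2]
    have h1 := (hb i).ne'
    field_simp
    ring
  -- uniqueness core
  have uniq : ∀ c : ℝ, 0 < c → ∀ w : Fin n → ℝ,
      (∀ i, w i = β i * w i - c * (α i * ∑ j, β j * w j)) → w = 0 := by
    intro c hc w hw
    set W := ∑ j, β j * w j with hWd
    have h1 : ∀ i, w i = -c * α i * W / (1 - β i) := by
      intro i
      rw [eq_div_iff (hb i).ne']
      linear_combination hw i
    have hWM : W = -c * W * M := by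
      calc W = ∑ i, β i * w i := hWd
      _ = ∑ i, (-c * W) * (β i * α i / (1 - β i)) :=
          Finset.sum_congr rfl fun i _ => by rw [h1 i]; ring
      _ = (-c * W) * ∑ i, β i * α i / (1 - β i) := by rw [← Finset.mul_sum]
      _ = -c * W * M := by rw [hMd]
    have hW0 : W = 0 := by
      have hpos : (0:ℝ) < 1 + c * M := by positivity
      have h2 : W * (1 + c * M) = 0 := by linear_combination hWM
      rcases mul_eq_zero.mp h2 with h | h
      · exact h
      · exact absurd h hpos.ne'
    funext i
    have := h1 i
    rw [hW0] at this
    simpa using this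
  refine ⟨fp1, fp2, ?_, ?_⟩
  · intro v hv
    have hc : (0:ℝ) < 2 / S := by positivity
    have hw : ∀ i, (v - ucon) i = β i * (v - ucon) i
        - (2 / S) * (α i * ∑ j, β j * (v - ucon) j) := by
      intro i
      have hvi : v i = β i * v i - (2 / S) * (α i * ∑ j, β j * v j) + B₁ i := by
        conv_lhs => rw [hv]
        rw [Pi.add_apply, hA₁, hmul]
      have hui : ucon i = β i * ucon i - (2 / S) * (α i * ∑ j, β j * ucon j) + B₁ i := by
        conv_lhs => rw [fp1]
        rw [Pi.add_apply, hA₁, hmul]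
      have hsum : ∑ j, β j * (v j - ucon j) = (∑ j, β j * v j) - ∑ j, β j * ucon j := by
        rw [← Finset.sum_sub_distrib]
        exact Finset.sum_congr rfl fun j _ => by ring
      simp only [Pi.sub_apply]
      rw [hsum]
      linear_combination hvi - hui
    exact sub_eq_zero.mp (uniq (2 / S) hc (v - ucon) hw)
  · intro v hv
    have hc : (0:ℝ) < S⁻¹ := by positivity
    have hw : ∀ i, (v - ucon) i = β i * (v - ucon) i
        - S⁻¹ * (α i * ∑ j, β j * (v - ucon) j) := by
      intro i
      have hvi : v i = β i * v i - S⁻¹ * (α i * ∑ j, β j * v j) + B₂ i := by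
        conv_lhs => rw [hv]
        rw [Pi.add_apply, hA₂, hmul]
      have hui : ucon i = β i * ucon i - S⁻¹ * (α i * ∑ j, β j * ucon j) + B₂ i := by
        conv_lhs => rw [fp2]
        rw [Pi.add_apply, hA₂, hmul]
      have hsum : ∑ j, β j * (v j - ucon j) = (∑ j, β j * v j) - ∑ j, β j * ucon j := by
        rw [← Finset.sum_sub_distrib]
        exact Finset.sum_congr rfl fun j _ => by ring
      simp only [Pi.sub_apply]
      rw [hsum]
      linear_combination hvi - hui
    exact sub_eq_zero.mp (uniq S⁻¹ hc (v - ucon) hw)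
end

section
/- Let n ≥ 1 and consider the switched system e(k+1) = A₁ e(k) if βᵀe(k) ≥ 0 and e(k+1) = A₂ e(k) if βᵀe(k) < 0, where A₁ = diag(β) - 2αβᵀ/∑ⱼαⱼ and A₂ = diag(β) - αβᵀ/∑ⱼαⱼ, with αᵢ > 0 and 0 < βᵢ < 1. Then for every initial condition e(0) ∈ ℝⁿ, e(k) → 0 as k → ∞; moreover there exists L ≥ 1 such that ‖e(k)‖ ≤ L (max_i βᵢ)^k ‖e(0)‖ for all k. -/
open Matrix Filter
open scoped RealInnerProductSpace

noncomputable def opS {n : ℕ} (β v : Fin n → ℝ) (c : ℝ) :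
    EuclideanSpace ℝ (Fin n) →ₗ[ℝ] EuclideanSpace ℝ (Fin n) where
  toFun y := WithLp.toLp 2 (fun i => β i * y i - c * v i * ∑ j, v j * y j)
  map_add' y z := by
    ext i
    simp only [PiLp.add_apply, PiLp.toLp_apply, mul_add, Finset.sum_add_distrib]
    ring
  map_smul' r y := by
    ext i
    simp only [PiLp.smul_apply, PiLp.toLp_apply, smul_eq_mul, RingHom.id_apply]
    rw [show ∑ j, v j * (r * y j) = r * ∑ j, v j * y j by
      rw [Finset.mul_sum]; exact Finset.sum_congr rfl fun j _ => by ring]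
    ring

lemma opS_apply {n : ℕ} (β v : Fin n → ℝ) (c : ℝ) (y : EuclideanSpace ℝ (Fin n)) (i : Fin n) :
    opS β v c y i = β i * y i - c * v i * ∑ j, v j * y j := rfl

lemma opS_inner {n : ℕ} (β v : Fin n → ℝ) (c : ℝ) (y z : EuclideanSpace ℝ (Fin n)) :
    ⟪opS β v c y, z⟫ =
      ∑ i, β i * y i * z i - c * (∑ j, v j * y j) * (∑ j, v j * z j) := by
  simp only [PiLp.inner_apply, RCLike.inner_apply, conj_trivial, opS_apply]
  rw [show ∑ i, z i * (β i * y i - c * v i * ∑ j, v j * y j)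
      = ∑ i, (β i * y i * z i - (c * ∑ j, v j * y j) * (v i * z i)) from
    Finset.sum_congr rfl fun i _ => by ring]
  rw [Finset.sum_sub_distrib, ← Finset.mul_sum]

lemma euclid_norm_sq {n : ℕ} (x : EuclideanSpace ℝ (Fin n)) : ‖x‖ ^ 2 = ∑ i, x i ^ 2 := by
  rw [EuclideanSpace.norm_eq, Real.sq_sqrt (by positivity)]
  exact Finset.sum_congr rfl fun i _ => by rw [Real.norm_eq_abs, sq_abs]


lemma sym_norm_bound {E : Type*} [NormedAddCommGroup E] [InnerProductSpace ℝ E]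
    (S : E →ₗ[ℝ] E) (hsym : ∀ x y : E, ⟪S x, y⟫ = ⟪x, S y⟫) {b : ℝ} (hb0 : 0 ≤ b)
    (hb : ∀ x : E, |⟪x, S x⟫| ≤ b * ‖x‖ ^ 2) (x : E) : ‖S x‖ ≤ b * ‖x‖ := by
  have key : ∀ u v : E, ⟪S u, v⟫ ≤ b / 2 * (‖u‖ ^ 2 + ‖v‖ ^ 2) := by
    intro u v
    have h4 : (4:ℝ) * ⟪S u, v⟫ = ⟪u + v, S (u + v)⟫ - ⟪u - v, S (u - v)⟫ := by
      have h1 : ∀ w : E, ⟪u, S w⟫ = ⟪S u, w⟫ := fun w => (hsym u w).symm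
      have h2 : ∀ w : E, ⟪v, S w⟫ = ⟪w, S v⟫ := fun w => by
        rw [← hsym v w, real_inner_comm]
      have h3 : ⟪S u, v⟫ = ⟪u, S v⟫ := hsym u v
      simp only [map_add, map_sub, inner_add_left, inner_add_right, inner_sub_left,
        inner_sub_right, h1, h2]
      ring
    have hpar : ‖u + v‖ ^ 2 + ‖u - v‖ ^ 2 = 2 * (‖u‖ ^ 2 + ‖v‖ ^ 2) := by
      have := norm_add_sq_real u v
      have := norm_sub_sq_real u v
      nlinarith [this]
    have hle : (4:ℝ) * ⟪S u, v⟫ ≤ b * ‖u + v‖ ^ 2 + b * ‖u - v‖ ^ 2 := by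
      rw [h4]
      have b1 := (abs_le.mp (hb (u + v))).2
      have b2 := (abs_le.mp (hb (u - v))).1
      linarith
    nlinarith [hle, hpar]
  rcases eq_or_ne (S x) 0 with h0 | h0
  · rw [h0, norm_zero]; positivity
  · have hSx : 0 < ‖S x‖ := norm_pos_iff.mpr h0
    have hx : x ≠ 0 := by rintro rfl; simp at h0
    have hxn : 0 < ‖x‖ := norm_pos_iff.mpr hx
    have := key x ((‖x‖ / ‖S x‖) • S x)
    rw [inner_smul_right, real_inner_self_eq_norm_sq, norm_smul] at this
    have habs : ‖‖x‖ / ‖S x‖‖ = ‖x‖ / ‖S x‖ := by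
      rw [Real.norm_eq_abs, abs_of_pos (div_pos hxn hSx)]
    rw [habs] at this
    have hval : ‖x‖ / ‖S x‖ * ‖S x‖ ^ 2 = ‖x‖ * ‖S x‖ := by
      field_simp
    have hval2 : (‖x‖ / ‖S x‖ * ‖S x‖) ^ 2 = ‖x‖ ^ 2 := by
      field_simp
    rw [hval, hval2] at this
    have : ‖x‖ * ‖S x‖ ≤ b * ‖x‖ ^ 2 := by nlinarith
    nlinarith [this, hxn]

lemma quad_step {n : ℕ} (α β : Fin n → ℝ) (hα : ∀ i, 0 < α i)
    (hβ : ∀ i, 0 < β i) {b : ℝ} (hb0 : 0 ≤ b) (hbb : ∀ i, β i ≤ b) {c : ℝ} (hc0 : 0 < c)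
    (hc2 : c * ∑ j, α j ≤ 2) (x : Fin n → ℝ) :
    ∑ i, (β i / α i) * (β i * x i - c * α i * ∑ j, β j * x j) ^ 2 ≤
      b ^ 2 * ∑ i, (β i / α i) * x i ^ 2 := by
  set v : Fin n → ℝ := fun i => Real.sqrt (α i * β i) with hv
  set y : EuclideanSpace ℝ (Fin n) := WithLp.toLp 2 (fun i => Real.sqrt (β i / α i) * x i) with hy
  have hw : ∀ i, 0 < β i / α i := fun i => div_pos (hβ i) (hα i)
  have hvw : ∀ j, v j * Real.sqrt (β j / α j) = β j := by
    intro j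
    have hne := (hα j).ne'
    simp only [hv]
    rw [← Real.sqrt_mul (mul_nonneg (hα j).le (hβ j).le),
      show α j * β j * (β j / α j) = β j ^ 2 by field_simp,
      Real.sqrt_sq (hβ j).le]
  have hva : ∀ i, v i = α i * Real.sqrt (β i / α i) := by
    intro i
    have hne := (hα i).ne'
    simp only [hv]
    rw [show α i * β i = α i ^ 2 * (β i / α i) by field_simp,
      Real.sqrt_mul (sq_nonneg _), Real.sqrt_sq (hα i).le]
  have hT : ∑ j, v j * y j = ∑ j, β j * x j :=
    Finset.sum_congr rfl fun j _ => by rw [hy]; simp only [PiLp.toLp_apply]; rw [← mul_assoc, hvw]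
  -- symmetry of opS
  have hsym : ∀ u w : EuclideanSpace ℝ (Fin n), ⟪opS β v c u, w⟫ = ⟪u, opS β v c w⟫ := by
    intro u w
    rw [opS_inner, real_inner_comm, opS_inner]
    rw [show ∑ i, β i * w i * u i = ∑ i, β i * u i * w i from
      Finset.sum_congr rfl fun i _ => by ring]
    ring
  -- quadratic form bound
  have hquad : ∀ u : EuclideanSpace ℝ (Fin n), |⟪u, opS β v c u⟫| ≤ b * ‖u‖ ^ 2 := by
    intro u
    rw [real_inner_comm, opS_inner, euclid_norm_sq]
    have hub : ∑ i, β i * u i * u i ≤ b * ∑ i, u i ^ 2 := by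
      rw [Finset.mul_sum]
      exact Finset.sum_le_sum fun i _ => by nlinarith [sq_nonneg (u i), hbb i, (hβ i).le]
    have hsq0 : (0:ℝ) ≤ ∑ i, β i * u i * u i :=
      Finset.sum_nonneg fun i _ => by nlinarith [sq_nonneg (u i), (hβ i).le]
    have hCS : (∑ j, v j * u j) ^ 2 ≤ (∑ j, α j) * ∑ j, β j * u j * u j := by
      have h1 : ∀ j, v j * u j = Real.sqrt (α j) * (Real.sqrt (β j) * u j) := by
        intro j
        simp only [hv]
        rw [Real.sqrt_mul (hα j).le]; ring
      calc (∑ j, v j * u j) ^ 2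
          = (∑ j, Real.sqrt (α j) * (Real.sqrt (β j) * u j)) ^ 2 := by
            rw [Finset.sum_congr rfl fun j _ => h1 j]
        _ ≤ (∑ j, Real.sqrt (α j) ^ 2) * ∑ j, (Real.sqrt (β j) * u j) ^ 2 :=
            Finset.sum_mul_sq_le_sq_mul_sq _ _ _
        _ = (∑ j, α j) * ∑ j, β j * u j * u j := by
            congr 1
            · exact Finset.sum_congr rfl fun j _ => Real.sq_sqrt (hα j).le
            · exact Finset.sum_congr rfl fun j _ => by
                rw [mul_pow, Real.sq_sqrt (hβ j).le]; ring
    have hα0 : (0:ℝ) < ∑ j, α j ∨ (∑ j, α j) = 0 := by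
      rcases (Finset.sum_nonneg fun j _ => (hα j).le).lt_or_eq with h | h
      · exact Or.inl h
      · exact Or.inr h.symm
    have hcT : c * (∑ j, v j * u j) ^ 2 ≤ 2 * ∑ i, β i * u i * u i := by
      have := mul_le_mul_of_nonneg_left hCS hc0.le
      calc c * (∑ j, v j * u j) ^ 2 ≤ c * ((∑ j, α j) * ∑ j, β j * u j * u j) := this
        _ = (c * ∑ j, α j) * ∑ j, β j * u j * u j := by ring
        _ ≤ 2 * ∑ i, β i * u i * u i := mul_le_mul_of_nonneg_right hc2 hsq0
    rw [abs_le]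
    constructor
    · nlinarith
    · nlinarith [sq_nonneg (∑ j, v j * u j)]
  have hbound := sym_norm_bound (opS β v c) hsym hb0 hquad y
  have hfin : ‖opS β v c y‖ ^ 2 ≤ b ^ 2 * ‖y‖ ^ 2 := by nlinarith [norm_nonneg (opS β v c y), norm_nonneg y]
  rw [euclid_norm_sq, euclid_norm_sq] at hfin
  calc ∑ i, (β i / α i) * (β i * x i - c * α i * ∑ j, β j * x j) ^ 2
      = ∑ i, (opS β v c y i) ^ 2 := by
        refine Finset.sum_congr rfl fun i _ => ?_
        rw [opS_apply, hT, hy]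
        simp only [PiLp.toLp_apply]
        rw [hva i]
        have hs : (0:ℝ) ≤ β i / α i := (hw i).le
        rw [show β i * (Real.sqrt (β i / α i) * x i) -
              c * (α i * Real.sqrt (β i / α i)) * ∑ j, β j * x j
            = Real.sqrt (β i / α i) * (β i * x i - c * α i * ∑ j, β j * x j) by ring,
          mul_pow, Real.sq_sqrt hs]
    _ ≤ b ^ 2 * ∑ i, y i ^ 2 := hfin
    _ = b ^ 2 * ∑ i, (β i / α i) * x i ^ 2 := by
        congr 1
        refine Finset.sum_congr rfl fun i _ => ?_
        rw [hy]; simp only [PiLp.toLp_apply]; rw [mul_pow, Real.sq_sqrt (hw i).le]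

theorem stmt8 (n : ℕ) (hn : 0 < n) (α β : Fin n → ℝ)
    (hα : ∀ i, 0 < α i) (hβ : ∀ i, 0 < β i ∧ β i < 1)
    (A₁ A₂ : Matrix (Fin n) (Fin n) ℝ)
    (hA₁ : A₁ = Matrix.diagonal β - (2 / ∑ j, α j) • Matrix.vecMulVec α β)
    (hA₂ : A₂ = Matrix.diagonal β - (∑ j, α j)⁻¹ • Matrix.vecMulVec α β)
    (e : ℕ → Fin n → ℝ)
    (he : ∀ k, e (k + 1) =
      if 0 ≤ ∑ i, β i * e k i then A₁.mulVec (e k) else A₂.mulVec (e k)) :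
    Tendsto e atTop (nhds 0) ∧
    ∃ L : ℝ, 1 ≤ L ∧ ∀ k : ℕ,
      ‖e k‖ ≤ L * (Finset.univ.sup' (Finset.univ_nonempty_iff.mpr ⟨⟨0, hn⟩⟩) β) ^ k * ‖e 0‖ := by
  have hne : (Finset.univ : Finset (Fin n)).Nonempty := ⟨⟨0, hn⟩, Finset.mem_univ _⟩
  set b : ℝ := Finset.univ.sup' (Finset.univ_nonempty_iff.mpr ⟨⟨0, hn⟩⟩) β with hbdef
  have hbb : ∀ i, β i ≤ b := fun i => Finset.le_sup' β (Finset.mem_univ i)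
  obtain ⟨i₀, -, hbi⟩ := Finset.exists_mem_eq_sup' (Finset.univ_nonempty_iff.mpr ⟨⟨0, hn⟩⟩) β
  have hb0 : 0 < b := (hβ i₀).1.trans_le (hbb i₀)
  have hb1 : b < 1 := by
    have hbe : b = β i₀ := hbi
    rw [hbe]; exact (hβ i₀).2
  have hαsum : 0 < ∑ j, α j := Finset.sum_pos (fun i _ => hα i) hne
  set Q : (Fin n → ℝ) → ℝ := fun x => ∑ i, (β i / α i) * x i ^ 2 with hQdef
  -- mulVec formulas
  have hmv : ∀ (c : ℝ) (x : Fin n → ℝ) (i : Fin n),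
      (Matrix.diagonal β - c • Matrix.vecMulVec α β).mulVec x i
        = β i * x i - c * α i * ∑ j, β j * x j := by
    intro c x i
    rw [Matrix.sub_mulVec]
    simp only [Pi.sub_apply, Matrix.mulVec_diagonal, Matrix.smul_mulVec, Pi.smul_apply,
      smul_eq_mul]
    congr 1
    rw [show (Matrix.vecMulVec α β).mulVec x i = ∑ j, α i * β j * x j from rfl]
    rw [Finset.mul_sum, Finset.mul_sum]
    exact Finset.sum_congr rfl fun j _ => by ring
  -- one step contraction
  have hstep : ∀ k, Q (e (k + 1)) ≤ b ^ 2 * Q (e k) := by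
    intro k
    rw [he k]
    split_ifs with h
    · rw [show Q (A₁.mulVec (e k))
          = ∑ i, (β i / α i) * (β i * e k i - (2 / ∑ j, α j) * α i * ∑ j, β j * e k j) ^ 2 from
        Finset.sum_congr rfl fun i _ => by rw [hA₁, hmv]]
      exact quad_step α β hα (fun i => (hβ i).1) hb0.le hbb
        (div_pos two_pos hαsum)
        (by rw [div_mul_cancel₀]; exact hαsum.ne') (e k)
    · rw [show Q (A₂.mulVec (e k))
          = ∑ i, (β i / α i) * (β i * e k i - (∑ j, α j)⁻¹ * α i * ∑ j, β j * e k j) ^ 2 from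
        Finset.sum_congr rfl fun i _ => by rw [hA₂, hmv]]
      exact quad_step α β hα (fun i => (hβ i).1) hb0.le hbb
        (inv_pos.mpr hαsum)
        (by rw [inv_mul_cancel₀ hαsum.ne']; norm_num) (e k)
  -- iterate
  have hQk : ∀ k, Q (e k) ≤ (b ^ 2) ^ k * Q (e 0) := by
    intro k
    induction k with
    | zero => simp
    | succ k ih =>
      calc Q (e (k + 1)) ≤ b ^ 2 * Q (e k) := hstep k
        _ ≤ b ^ 2 * ((b ^ 2) ^ k * Q (e 0)) := by
            exact mul_le_mul_of_nonneg_left ih (sq_nonneg b)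
        _ = (b ^ 2) ^ (k + 1) * Q (e 0) := by ring
  -- norm comparisons
  set m : ℝ := Finset.univ.inf' hne (fun i => β i / α i) with hmdef
  have hm : ∀ i, m ≤ β i / α i := fun i => Finset.inf'_le _ (Finset.mem_univ i)
  obtain ⟨j₀, -, hj⟩ := Finset.exists_mem_eq_inf' hne (fun i => β i / α i)
  have hm0 : 0 < m := by
    have hme : m = β j₀ / α j₀ := hj
    rw [hme]; exact div_pos (hβ j₀).1 (hα j₀)
  set W : ℝ := ∑ i, β i / α i with hWdef
  have hW0 : 0 < W := Finset.sum_pos (fun i _ => div_pos (hβ i).1 (hα i)) hne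
  have hmW : m ≤ W := le_trans (hm j₀)
    (Finset.single_le_sum (fun i _ => (div_pos (hβ i).1 (hα i)).le) (Finset.mem_univ j₀))
  have hlow : ∀ x : Fin n → ℝ, m * ‖x‖ ^ 2 ≤ Q x := by
    intro x
    obtain ⟨i, -, hi⟩ := Finset.exists_mem_eq_sup Finset.univ hne (fun i => ‖x i‖₊)
    have hxi : ‖x‖ = |x i| := by
      rw [Pi.norm_def, hi]; exact coe_nnnorm _
    rw [hxi]
    calc m * |x i| ^ 2 ≤ (β i / α i) * x i ^ 2 := by
          rw [sq_abs]; exact mul_le_mul_of_nonneg_right (hm i) (sq_nonneg _)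
      _ ≤ Q x := Finset.single_le_sum
          (fun j _ => mul_nonneg (div_pos (hβ j).1 (hα j)).le (sq_nonneg _))
          (Finset.mem_univ i)
  have hup : ∀ x : Fin n → ℝ, Q x ≤ W * ‖x‖ ^ 2 := by
    intro x
    rw [hWdef, Finset.sum_mul]
    refine Finset.sum_le_sum fun i _ => ?_
    have h1 : |x i| ≤ ‖x‖ := by rw [← Real.norm_eq_abs]; exact norm_le_pi_norm x i
    have h2 : x i ^ 2 ≤ ‖x‖ ^ 2 := by nlinarith [abs_nonneg (x i), sq_abs (x i)]
    exact mul_le_mul_of_nonneg_left h2 (div_pos (hβ i).1 (hα i)).le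
  set L : ℝ := Real.sqrt (W / m) with hLdef
  have hL1 : 1 ≤ L := Real.one_le_sqrt.mpr ((one_le_div hm0).mpr hmW)
  have hL2 : L ^ 2 = W / m := Real.sq_sqrt (div_pos hW0 hm0).le
  have hbound : ∀ k, ‖e k‖ ≤ L * b ^ k * ‖e 0‖ := by
    intro k
    have h1 : m * ‖e k‖ ^ 2 ≤ (b ^ 2) ^ k * (W * ‖e 0‖ ^ 2) :=
      le_trans (hlow _) (le_trans (hQk k) (mul_le_mul_of_nonneg_left (hup _) (by positivity)))
    have h2 : ‖e k‖ ^ 2 ≤ (L * b ^ k * ‖e 0‖) ^ 2 := by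
      have h3 : m * (L * b ^ k * ‖e 0‖) ^ 2 = (b ^ 2) ^ k * (W * ‖e 0‖ ^ 2) := by
        rw [mul_pow, mul_pow, hL2]
        field_simp
        ring
      rw [← mul_le_mul_iff_right₀ hm0, h3]
      exact h1
    calc ‖e k‖ = Real.sqrt (‖e k‖ ^ 2) := (Real.sqrt_sq (norm_nonneg _)).symm
      _ ≤ Real.sqrt ((L * b ^ k * ‖e 0‖) ^ 2) := Real.sqrt_le_sqrt h2
      _ = L * b ^ k * ‖e 0‖ := Real.sqrt_sq (by positivity)
  refine ⟨?_, L, hL1, hbound⟩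
  have hg : Tendsto (fun k : ℕ => L * b ^ k * ‖e 0‖) atTop (nhds 0) := by
    have := (tendsto_pow_atTop_nhds_zero_of_lt_one hb0.le hb1).const_mul L |>.mul_const ‖e 0‖
    simpa using this
  exact squeeze_zero_norm hbound hg
end

section
/- Let n ≥ 1, λ > 0, α ∈ ℝⁿ with αᵢ > 0, β ∈ ℝⁿ with 0 < βᵢ < 1 satisfying 1 + (∑ᵢαᵢ)/(∑ᵢ((1+βᵢ)/(1-βᵢ))αᵢ) = φ, and let u_con be given by (u_con)ᵢ = αᵢT*/(1-βᵢ) with T* = 2λ/∑ⱼ((1+βⱼ)/(1-βⱼ))αⱼ. Then βᵀu_con = (2-φ)λ and ∑ᵢ(u_con)ᵢ = φλ. -/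
theorem stmt16 (n : ℕ) (hn : 0 < n) (lam φ : ℝ) (hlam : 0 < lam)
    (α β : Fin n → ℝ) (hα : ∀ i, 0 < α i) (hβ : ∀ i, 0 < β i ∧ β i < 1)
    (hφ : 1 + (∑ i, α i) / (∑ i, ((1 + β i) / (1 - β i)) * α i) = φ)
    (Tstar : ℝ) (hT : Tstar = 2 * lam / ∑ j, ((1 + β j) / (1 - β j)) * α j)
    (ucon : Fin n → ℝ) (hu : ∀ i, ucon i = α i * Tstar / (1 - β i)) :
    (∑ i, β i * ucon i) = (2 - φ) * lam ∧ (∑ i, ucon i) = φ * lam := by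
  set S := ∑ j, ((1 + β j) / (1 - β j)) * α j with hSdef
  have hne : (Finset.univ : Finset (Fin n)).Nonempty := Finset.univ_nonempty_iff.mpr
    ⟨⟨0, hn⟩⟩
  have hS : 0 < S := Finset.sum_pos (fun i _ => by
    have h1 := (hβ i).1; have h2 := (hβ i).2; have h3 := hα i
    have : 0 < 1 - β i := by linarith
    positivity) hne
  set A := ∑ i, α i with hAdef
  set B := ∑ i, β i * α i / (1 - β i) with hBdef
  set C := ∑ i, α i / (1 - β i) with hCdef
  have hSA : S - A = 2 * B := by
    rw [hSdef, hAdef, hBdef, ← Finset.sum_sub_distrib, Finset.mul_sum]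
    refine Finset.sum_congr rfl fun i _ => ?_
    have h2 := (hβ i).2
    have : (1 : ℝ) - β i ≠ 0 := by linarith
    field_simp
    ring
  have hSC : S + A = 2 * C := by
    rw [hSdef, hAdef, hCdef, ← Finset.sum_add_distrib, Finset.mul_sum]
    refine Finset.sum_congr rfl fun i _ => ?_
    have h2 := (hβ i).2
    have : (1 : ℝ) - β i ≠ 0 := by linarith
    field_simp
    ring
  have hsum1 : ∑ i, β i * ucon i = (2 * lam / S) * B := by
    rw [hBdef, Finset.mul_sum]
    refine Finset.sum_congr rfl fun i _ => ?_
    rw [hu, hT]; ring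
  have hsum2 : ∑ i, ucon i = (2 * lam / S) * C := by
    rw [hCdef, Finset.mul_sum]
    refine Finset.sum_congr rfl fun i _ => ?_
    rw [hu, hT]; ring
  have hSne : S ≠ 0 := ne_of_gt hS
  constructor
  · rw [hsum1, ← hφ]
    field_simp
    linear_combination (-1) * hSA
  · rw [hsum2, ← hφ]
    field_simp
    linear_combination (-1) * hSC
end

section
/- Let n ≥ 1, α ∈ ℝⁿ with αᵢ > 0 and β ∈ ℝⁿ with 0 < β₁ ≤ β₂ ≤ ... ≤ βₙ < 1, and let A₂ = diag(β) - αβᵀ/∑ⱼαⱼ with real eigenvalues ξ₁ ≤ ξ₂ ≤ ... ≤ ξₙ (which exist since A₂ is diagonally similar to a symmetric matrix). Then the eigenvalues interlace with the βᵢ: ξ₁ ≤ β₁ ≤ ξ₂ ≤ β₂ ≤ ... ≤ ξₙ ≤ βₙ, and moreover ξ₁ = 0. -/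
open Matrix Polynomial Finset

lemma det_diag_add_vmv {K : Type*} [Field K] {n : ℕ} (d u v : Fin n → K) (hd : ∀ i, d i ≠ 0) :
    (Matrix.diagonal d + Matrix.vecMulVec u v).det
      = ∏ i, d i + ∑ i, u i * v i * ∏ j ∈ Finset.univ.erase i, d j := by
  have hdet : IsUnit (Matrix.diagonal d).det := by
    simp [Matrix.det_diagonal, isUnit_iff_ne_zero, Finset.prod_ne_zero_iff, hd]
  have hvmv : Matrix.vecMulVec u v = Matrix.replicateCol Unit u * Matrix.replicateRow Unit v := by
    ext i j; simp [Matrix.vecMulVec_apply, Matrix.mul_apply]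
  have hinv : (Matrix.diagonal d)⁻¹ = Matrix.diagonal (fun i => (d i)⁻¹) :=
    Matrix.inv_eq_right_inv (by
      rw [Matrix.diagonal_mul_diagonal]
      convert Matrix.diagonal_one using 2
      funext i; exact mul_inv_cancel₀ (hd i))
  rw [hvmv, Matrix.det_add_replicateCol_mul_replicateRow hdet u v, hinv]
  have h1 : (1 + Matrix.replicateRow Unit v * (Matrix.diagonal fun i => (d i)⁻¹) * Matrix.replicateCol Unit u).det
      = 1 + ∑ j, v j * (d j)⁻¹ * u j := by
    rw [Matrix.det_unique]
    simp [Matrix.mul_apply, Matrix.one_apply, Matrix.diagonal, Finset.mul_sum]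
  rw [h1, Matrix.det_diagonal, mul_add, mul_one, Finset.mul_sum]
  congr 1
  apply Finset.sum_congr rfl; intro i _
  rw [← Finset.mul_prod_erase Finset.univ d (Finset.mem_univ i)]
  field_simp [hd i]
lemma charpoly_formula {n : ℕ} (α β : Fin n → ℝ) (c : ℝ) :
    (Matrix.diagonal β - c • Matrix.vecMulVec α β).charpoly
      = ∏ j, (X - C (β j)) + ∑ i, C (c * α i * β i) * ∏ j ∈ Finset.univ.erase i, (X - C (β j)) := by
  set M := Matrix.diagonal β - c • Matrix.vecMulVec α β with hM
  have hMa : ∀ i j, M i j = (if i = j then β i else 0) - c * α i * β j := by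
    intro i j
    simp [hM, Matrix.diagonal, Matrix.vecMulVec, Matrix.sub_apply, mul_assoc]
  have hcm : Matrix.charmatrix M
      = Matrix.diagonal (fun i => X - C (β i))
        + Matrix.vecMulVec (fun i => C (c * α i)) (fun j => C (β j)) := by
    refine Matrix.ext fun i j => ?_
    by_cases h : i = j
    · subst h
      rw [Matrix.charmatrix_apply_eq, hMa i i]
      simp only [if_pos rfl, Matrix.add_apply, Matrix.diagonal_apply_eq,
        Matrix.vecMulVec_apply, C_sub, C_mul, if_true]
      ring
    · rw [Matrix.charmatrix_apply_ne _ _ _ h, hMa i j]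
      simp only [if_neg h, Matrix.add_apply, Matrix.diagonal_apply_ne _ h,
        Matrix.vecMulVec_apply, C_sub, C_mul, C_0, zero_sub, map_neg]
      ring
  rw [Matrix.charpoly, hcm]
  set φ := algebraMap ℝ[X] (RatFunc ℝ) with hφ
  have hφinj : Function.Injective φ := RatFunc.algebraMap_injective ℝ
  apply hφinj
  rw [RingHom.map_det]
  have hmm : (RingHom.mapMatrix φ) (Matrix.diagonal (fun i => X - C (β i))
        + Matrix.vecMulVec (fun i => C (c * α i)) (fun j => C (β j)))
      = Matrix.diagonal (fun i => φ (X - C (β i)))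
        + Matrix.vecMulVec (fun i => φ (C (c * α i))) (fun j => φ (C (β j))) := by
    refine Matrix.ext fun i j => ?_
    by_cases h : i = j <;>
      simp [Matrix.diagonal, Matrix.vecMulVec, h, apply_ite φ]
  rw [hmm, det_diag_add_vmv _ _ _ (fun i h =>
    X_sub_C_ne_zero (β i) (hφinj (by rw [h, map_zero])))]
  rw [map_add, map_prod, map_sum]
  congr 1
  apply Finset.sum_congr rfl; intro i _
  rw [_root_.map_mul φ, C_mul, C_mul, _root_.map_mul φ, _root_.map_mul φ, map_prod, C_mul, _root_.map_mul φ]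
lemma prod_neg_aux {ι : Type*} (s : Finset ι) (f : ι → ℝ) :
    ∏ i ∈ s, (-f i) = (-1) ^ s.card * ∏ i ∈ s, f i := by
  rw [← Finset.prod_const, ← Finset.prod_mul_distrib]
  exact Finset.prod_congr rfl fun i _ => by ring

lemma pow_cancel_aux (b : ℝ) (a e : ℕ) (G H : ℝ[X]) (hle : a ≤ e)
    (h : (X - C b) ^ a * G = (X - C b) ^ e * H) (hG : Polynomial.eval b G ≠ 0) :
    a = e ∧ G = H := by
  have hpow : (X - C b) ^ a ≠ 0 := pow_ne_zero _ (X_sub_C_ne_zero b)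
  have h2 : G = (X - C b) ^ (e - a) * H := by
    apply mul_left_cancel₀ hpow
    rw [h, ← mul_assoc, ← pow_add]
    congr 2
    omega
  rcases Nat.eq_zero_or_pos (e - a) with h0 | h0
  · refine ⟨by omega, ?_⟩
    rw [h2, h0, pow_zero, one_mul]
  · exfalso
    apply hG
    rw [h2, eval_mul, eval_pow, eval_sub, eval_X, eval_C, sub_self, zero_pow (by omega), zero_mul]

lemma prod_sign_aux {n : ℕ} (x : Fin n → ℝ) (b : ℝ) :
    (0 < ∏ i ∈ Finset.univ.filter (fun i => x i ≠ b), (b - x i)) ↔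
      Even (Finset.univ.filter (fun i => b < x i)).card := by
  rw [← Finset.prod_filter_mul_prod_filter_not (Finset.univ.filter (fun i => x i ≠ b))
    (fun i => b < x i)]
  have h1 : (Finset.univ.filter (fun i => x i ≠ b)).filter (fun i => b < x i)
      = Finset.univ.filter (fun i => b < x i) := by
    rw [Finset.filter_filter]
    exact Finset.filter_congr fun i _ => by constructor <;> intro h <;>
      [exact h.2; exact ⟨ne_of_gt h, h⟩]
  have h2 : 0 < ∏ i ∈ (Finset.univ.filter (fun i => x i ≠ b)).filter (fun i => ¬ b < x i),
      (b - x i) := by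
    apply Finset.prod_pos
    intro i hi
    simp only [Finset.mem_filter] at hi
    have := hi.1.2
    have := hi.2
    cases lt_or_eq_of_le (not_lt.mp hi.2) with
    | inl h => linarith
    | inr h => exact absurd h hi.1.2
  have h3 : ∏ i ∈ Finset.univ.filter (fun i => b < x i), (b - x i)
      = (-1) ^ (Finset.univ.filter (fun i => b < x i)).card
        * ∏ i ∈ Finset.univ.filter (fun i => b < x i), (x i - b) := by
    rw [← prod_neg_aux]
    exact Finset.prod_congr rfl fun i _ => by ring
  rw [h1, h3]
  have h4 : 0 < ∏ i ∈ Finset.univ.filter (fun i => b < x i), (x i - b) := by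
    apply Finset.prod_pos
    intro i hi
    simp only [Finset.mem_filter] at hi
    linarith [hi.2]
  set c := (Finset.univ.filter (fun i => b < x i)).card
  rcases Nat.even_or_odd c with hc | hc
  · rw [hc.neg_one_pow]
    constructor
    · intro _; exact hc
    · intro _; positivity
  · rw [hc.neg_one_pow]
    constructor
    · intro h
      nlinarith
    · intro h
      exact absurd h (Nat.not_even_iff_odd.mpr hc)

lemma tri_card {n : ℕ} (x : Fin n → ℝ) (b : ℝ) :
    (Finset.univ.filter (fun i => x i < b)).card + (Finset.univ.filter (fun i => x i = b)).card
      + (Finset.univ.filter (fun i => b < x i)).card = n := by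
  have h1 := Finset.card_filter_add_card_filter_not
    (s := (Finset.univ : Finset (Fin n))) (p := fun i => x i < b)
  have h2 : Finset.univ.filter (fun i => ¬ x i < b)
      = Finset.univ.filter (fun i => x i = b) ∪ Finset.univ.filter (fun i => b < x i) := by
    rw [← Finset.filter_or]
    exact Finset.filter_congr fun i _ => by
      constructor
      · intro h
        rcases eq_or_lt_of_le (not_lt.mp h) with h' | h'
        · exact Or.inl h'.symm
        · exact Or.inr h'
      · rintro (h | h) <;> simp [h, le_of_lt, not_lt] <;> linarith
  have h3 : Disjoint (Finset.univ.filter (fun i => x i = b))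
      (Finset.univ.filter (fun i => b < x i)) := by
    rw [Finset.disjoint_left]
    intro i hi1 hi2
    simp only [Finset.mem_filter] at hi1 hi2
    exact absurd hi1.2 (ne_of_gt hi2.2)
  rw [h2, Finset.card_union_of_disjoint h3] at h1
  simp only [Finset.card_univ, Fintype.card_fin] at h1
  omega
lemma key_fact {n : ℕ} (α β ξ : Fin n → ℝ) (s : ℝ) (hs : 0 < s)
    (hα : ∀ i, 0 < α i) (hβpos : ∀ i, 0 < β i)
    (hE : ∏ i, (X - C (ξ i)) = ∏ j, (X - C (β j))
      + ∑ i, C (s⁻¹ * α i * β i) * ∏ j ∈ Finset.univ.erase i, (X - C (β j)))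
    (b : ℝ) (k0 : Fin n) (hk0 : β k0 = b) :
    (Finset.univ.filter fun i => ξ i = b).card + 1 = (Finset.univ.filter fun j => β j = b).card
    ∧ (Even (Finset.univ.filter fun i => b < ξ i).card ↔
        Even (Finset.univ.filter fun j => b < β j).card) := by
  have hbpos : 0 < b := hk0 ▸ hβpos k0
  set S : Finset (Fin n) := Finset.univ.filter (fun j => β j = b) with hS
  have hSmem : ∀ j, j ∈ S ↔ β j = b := fun j => by simp [hS]
  have hScmem : ∀ j, j ∈ Sᶜ ↔ β j ≠ b := fun j => by simp [hS]
  have hSne : k0 ∈ S := (hSmem k0).mpr hk0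
  have hm : 1 ≤ S.card := Finset.card_pos.mpr ⟨k0, hSne⟩
  set m := S.card with hmdef
  set Q : ℝ[X] := ∏ j ∈ Sᶜ, (X - C (β j)) with hQ
  -- full product factorization
  have hSprod : ∏ j ∈ S, (X - C (β j)) = (X - C b) ^ m := by
    rw [Finset.prod_congr rfl (fun j hj => by rw [(hSmem j).mp hj] : ∀ j ∈ S, (X - C (β j)) = X - C b),
      Finset.prod_const]
  have hPβ : ∏ j, (X - C (β j)) = (X - C b) ^ m * Q := by
    rw [← Finset.prod_mul_prod_compl S, hSprod]
  have hQin : ∀ i ∈ S, ∏ j ∈ Finset.univ.erase i, (X - C (β j))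
      = (X - C b) ^ (m - 1) * Q := by
    intro i hi
    rw [← Finset.prod_filter_mul_prod_filter_not (Finset.univ.erase i) (fun j => β j = b)]
    congr 1
    · rw [Finset.filter_erase, ← hS]
      rw [Finset.prod_congr rfl (fun j hj => by
          rw [(hSmem j).mp (Finset.mem_of_mem_erase hj)] :
          ∀ j ∈ S.erase i, (X - C (β j)) = X - C b),
        Finset.prod_const, Finset.card_erase_of_mem hi]
    · rw [Finset.filter_erase, ← Finset.compl_filter, ← hS,
        Finset.erase_eq_of_notMem (by simp [hi])]
  have hQout : ∀ i ∈ Sᶜ, ∏ j ∈ Finset.univ.erase i, (X - C (β j))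
      = (X - C b) ^ m * ∏ j ∈ Sᶜ.erase i, (X - C (β j)) := by
    intro i hi
    rw [← Finset.prod_filter_mul_prod_filter_not (Finset.univ.erase i) (fun j => β j = b)]
    congr 1
    · rw [Finset.filter_erase, ← hS,
        Finset.erase_eq_of_notMem (Finset.mem_compl.mp hi), hSprod]
    · rw [Finset.filter_erase, ← Finset.compl_filter, ← hS]
  -- rewrite the RHS of hE
  set H : ℝ[X] := (X - C b) * Q + (∑ i ∈ S, C (s⁻¹ * α i * b)) * Q
      + (X - C b) * (∑ i ∈ Sᶜ, C (s⁻¹ * α i * β i) * ∏ j ∈ Sᶜ.erase i, (X - C (β j)))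
    with hH
  have e1 : (∑ i ∈ S, C (s⁻¹ * α i * β i) * ∏ j ∈ Finset.univ.erase i, (X - C (β j)))
      = (∑ i ∈ S, C (s⁻¹ * α i * b)) * ((X - C b) ^ (m - 1) * Q) := by
    rw [Finset.sum_mul]
    exact Finset.sum_congr rfl fun i hi => by rw [hQin i hi, (hSmem i).mp hi]
  have e2 : (∑ i ∈ Sᶜ, C (s⁻¹ * α i * β i) * ∏ j ∈ Finset.univ.erase i, (X - C (β j)))
      = (X - C b) ^ m * (∑ i ∈ Sᶜ, C (s⁻¹ * α i * β i) * ∏ j ∈ Sᶜ.erase i, (X - C (β j))) := by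
    rw [Finset.mul_sum]
    exact Finset.sum_congr rfl fun i hi => by rw [hQout i hi]; ring
  have hpow : (X - C b) ^ m = (X - C b) ^ (m - 1) * (X - C b) := by
    conv_lhs => rw [show m = (m - 1) + 1 by omega]
    rw [pow_succ]
  have hRHS : ∏ j, (X - C (β j))
      + ∑ i, C (s⁻¹ * α i * β i) * ∏ j ∈ Finset.univ.erase i, (X - C (β j))
      = (X - C b) ^ (m - 1) * H := by
    rw [hPβ, ← Finset.sum_add_sum_compl S
      (fun i => C (s⁻¹ * α i * β i) * ∏ j ∈ Finset.univ.erase i, (X - C (β j))), e1, e2, hH,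
      hpow]
    ring
  -- LHS factorization
  set I : Finset (Fin n) := Finset.univ.filter (fun i => ξ i = b) with hI
  set G : ℝ[X] := ∏ i ∈ Iᶜ, (X - C (ξ i)) with hG
  have hLHS : ∏ i, (X - C (ξ i)) = (X - C b) ^ I.card * G := by
    rw [← Finset.prod_mul_prod_compl I]
    congr 1
    rw [Finset.prod_congr rfl (fun i hi => by
        rw [(by simp [hI] : i ∈ I ↔ ξ i = b).mp hi] : ∀ i ∈ I, (X - C (ξ i)) = X - C b),
      Finset.prod_const]
  -- evaluations at b
  have hQb : Polynomial.eval b Q = ∏ j ∈ Sᶜ, (b - β j) := by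
    rw [hQ, Polynomial.eval_prod]
    exact Finset.prod_congr rfl fun j _ => by simp
  have hQbne : Polynomial.eval b Q ≠ 0 := by
    rw [hQb]
    exact Finset.prod_ne_zero_iff.mpr fun j hj =>
      sub_ne_zero_of_ne (Ne.symm ((hScmem j).mp hj))
  have hcS : 0 < ∑ i ∈ S, s⁻¹ * α i * b :=
    Finset.sum_pos (fun i _ => mul_pos (mul_pos (inv_pos.mpr hs) (hα i)) hbpos) ⟨k0, hSne⟩
  have hHb : Polynomial.eval b H = (∑ i ∈ S, s⁻¹ * α i * b) * ∏ j ∈ Sᶜ, (b - β j) := by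
    have h1 : Polynomial.eval b ((X - C b) * Q) = 0 := by simp
    have h3 : Polynomial.eval b ((X - C b)
        * (∑ i ∈ Sᶜ, C (s⁻¹ * α i * β i) * ∏ j ∈ Sᶜ.erase i, (X - C (β j)))) = 0 := by simp
    have h2 : Polynomial.eval b ((∑ i ∈ S, C (s⁻¹ * α i * b)) * Q)
        = (∑ i ∈ S, s⁻¹ * α i * b) * ∏ j ∈ Sᶜ, (b - β j) := by
      rw [Polynomial.eval_mul, Polynomial.eval_finset_sum, hQb]
      simp
    rw [hH, Polynomial.eval_add, Polynomial.eval_add, h1, h3, h2]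
    ring
  have hHbne : Polynomial.eval b H ≠ 0 := by
    rw [hHb]
    exact mul_ne_zero (ne_of_gt hcS) (hQb ▸ hQbne)
  have hGb : Polynomial.eval b G = ∏ i ∈ Iᶜ, (b - ξ i) := by
    rw [hG, Polynomial.eval_prod]
    exact Finset.prod_congr rfl fun i _ => by simp
  have hGbne : Polynomial.eval b G ≠ 0 := by
    rw [hGb]
    refine Finset.prod_ne_zero_iff.mpr fun i hi => sub_ne_zero_of_ne (Ne.symm ?_)
    simpa [hI] using hi
  -- compare the two factorizations
  have hEq : (X - C b) ^ I.card * G = (X - C b) ^ (m - 1) * H := by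
    rw [← hLHS, hE, hRHS]
  have hcards : I.card = m - 1 ∧ G = H := by
    rcases le_total I.card (m - 1) with hle | hle
    · exact pow_cancel_aux b _ _ G H hle hEq hGbne
    · obtain ⟨h1, h2⟩ := pow_cancel_aux b _ _ H G hle hEq.symm hHbne
      exact ⟨h1.symm, h2.symm⟩
  constructor
  · rw [hcards.1]
    omega
  · -- parity via sign of products
    have hev : ∏ i ∈ Iᶜ, (b - ξ i) = (∑ i ∈ S, s⁻¹ * α i * b) * ∏ j ∈ Sᶜ, (b - β j) := by
      rw [← hGb, hcards.2, hHb]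
    have hIc : Iᶜ = Finset.univ.filter (fun i => ξ i ≠ b) := by
      rw [hI, Finset.compl_filter]
    have hSc : Sᶜ = Finset.univ.filter (fun j => β j ≠ b) := by
      rw [hS, Finset.compl_filter]
    have hsξ := prod_sign_aux ξ b
    have hsβ := prod_sign_aux β b
    rw [← hIc] at hsξ
    rw [← hSc] at hsβ
    rw [← hsξ, ← hsβ, hev]
    constructor
    · intro h
      by_contra hneg
      have h1 : ∏ j ∈ Sᶜ, (b - β j) ≤ 0 := by
        rcases lt_trichotomy (∏ j ∈ Sᶜ, (b - β j)) 0 with h' | h' | h'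
        · linarith
        · exact le_of_eq h'
        · exact absurd h' hneg
      nlinarith
    · intro h
      positivity
lemma even_mod_aux {a b : ℕ} (h : Even a ↔ Even b) : a % 2 = b % 2 := by
  rcases Nat.even_or_odd a with ha | ha
  · rw [Nat.even_iff.mp ha, Nat.even_iff.mp (h.mp ha)]
  · rw [Nat.odd_iff.mp ha, Nat.odd_iff.mp (Nat.not_even_iff_odd.mp
      (fun hb => (Nat.not_odd_iff_even.mpr (h.mpr hb)) ha))]

theorem stmt19 (n : ℕ) (hn : 0 < n) (α β : Fin n → ℝ)
    (hα : ∀ i, 0 < α i) (hβ : ∀ i, 0 < β i ∧ β i < 1) (hβmono : Monotone β)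
    (A₂ : Matrix (Fin n) (Fin n) ℝ)
    (hA₂ : A₂ = Matrix.diagonal β - (∑ j, α j)⁻¹ • Matrix.vecMulVec α β)
    (ξ : Fin n → ℝ) (hξmono : Monotone ξ)
    (hspec : A₂.charpoly = ∏ i, (Polynomial.X - Polynomial.C (ξ i))) :
    (∀ i : Fin n, ξ i ≤ β i) ∧
    (∀ i j : Fin n, (i : ℕ) + 1 = (j : ℕ) → β i ≤ ξ j) ∧
    ξ ⟨0, hn⟩ = 0 := by
  have hne : Nonempty (Fin n) := ⟨⟨0, hn⟩⟩
  set s : ℝ := ∑ j, α j with hsdef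
  have hs : 0 < s := Finset.sum_pos (fun i _ => hα i) Finset.univ_nonempty
  have hβpos : ∀ i, 0 < β i := fun i => (hβ i).1
  have hE : ∏ i, (X - C (ξ i)) = ∏ j, (X - C (β j))
      + ∑ i, C (s⁻¹ * α i * β i) * ∏ j ∈ Finset.univ.erase i, (X - C (β j)) := by
    rw [← hspec, hA₂, charpoly_formula]
  have hEt : ∀ t : ℝ, ∏ i, (t - ξ i) = ∏ j, (t - β j)
      + ∑ i, (s⁻¹ * α i * β i) * ∏ j ∈ Finset.univ.erase i, (t - β j) := by
    intro t
    have := congrArg (Polynomial.eval t) hE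
    simpa [Polynomial.eval_prod, Polynomial.eval_finset_sum] using this
  -- no nonpositive... : negative t gives nonvanishing
  have hsum1 : ∑ i, s⁻¹ * α i = 1 := by
    rw [← Finset.mul_sum, ← hsdef, inv_mul_cancel₀ (ne_of_gt hs)]
  have hneg : ∀ t : ℝ, t < 0 → ∏ i, (t - ξ i) ≠ 0 := by
    intro t ht
    rw [hEt t]
    have hgpos : ∀ j : Fin n, 0 < β j - t := fun j => by linarith [hβpos j]
    have key : ∑ i, (s⁻¹ * α i * β i) * ∏ j ∈ Finset.univ.erase i, (β j - t)
        < ∏ j, (β j - t) := by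
      have hstep : ∀ i : Fin n, (s⁻¹ * α i * β i) * ∏ j ∈ Finset.univ.erase i, (β j - t)
          < (s⁻¹ * α i) * ∏ j, (β j - t) := by
        intro i
        rw [← Finset.mul_prod_erase Finset.univ (fun j => β j - t) (Finset.mem_univ i)]
        have hp : 0 < ∏ j ∈ Finset.univ.erase i, (β j - t) :=
          Finset.prod_pos fun j _ => hgpos j
        have hc : 0 < s⁻¹ * α i := mul_pos (inv_pos.mpr hs) (hα i)
        have : β i < β i - t := by linarith
        calc (s⁻¹ * α i * β i) * ∏ j ∈ Finset.univ.erase i, (β j - t)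
            < (s⁻¹ * α i * (β i - t)) * ∏ j ∈ Finset.univ.erase i, (β j - t) := by
              apply mul_lt_mul_of_pos_right _ hp
              exact mul_lt_mul_of_pos_left this hc
          _ = (s⁻¹ * α i) * ((β i - t) * ∏ j ∈ Finset.univ.erase i, (β j - t)) := by ring
      calc ∑ i, (s⁻¹ * α i * β i) * ∏ j ∈ Finset.univ.erase i, (β j - t)
          < ∑ i, (s⁻¹ * α i) * ∏ j, (β j - t) :=
            Finset.sum_lt_sum_of_nonempty Finset.univ_nonempty fun i _ => hstep i
        _ = ∏ j, (β j - t) := by rw [← Finset.sum_mul, hsum1, one_mul]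
    -- transfer signs
    have hprod : ∏ j, (t - β j) = (-1) ^ n * ∏ j, (β j - t) := by
      rw [show (∏ j, (t - β j)) = ∏ j : Fin n, -(β j - t) by
        exact Finset.prod_congr rfl fun j _ => by ring, prod_neg_aux]
      simp
    have hprode : ∀ i : Fin n, ∏ j ∈ Finset.univ.erase i, (t - β j)
        = (-1) ^ (n - 1) * ∏ j ∈ Finset.univ.erase i, (β j - t) := by
      intro i
      rw [show (∏ j ∈ Finset.univ.erase i, (t - β j))
          = ∏ j ∈ Finset.univ.erase i, -(β j - t) from
        Finset.prod_congr rfl fun j _ => by ring, prod_neg_aux]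
      congr 2
      rw [Finset.card_erase_of_mem (Finset.mem_univ i)]
      simp
    intro hzero
    have h2 : (-1 : ℝ) ^ n * (∏ j, (t - β j)
        + ∑ i, (s⁻¹ * α i * β i) * ∏ j ∈ Finset.univ.erase i, (t - β j)) = 0 := by
      rw [hzero, mul_zero]
    rw [mul_add, hprod, ← mul_assoc, ← mul_pow, neg_one_mul, neg_neg, one_pow, one_mul] at h2
    have h3 : (-1 : ℝ) ^ n * ∑ i, (s⁻¹ * α i * β i) * ∏ j ∈ Finset.univ.erase i, (t - β j)
        = - ∑ i, (s⁻¹ * α i * β i) * ∏ j ∈ Finset.univ.erase i, (β j - t) := by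
      rw [Finset.mul_sum, ← Finset.sum_neg_distrib]
      apply Finset.sum_congr rfl
      intro i _
      rw [hprode i]
      have hodd : (-1 : ℝ) ^ n * (-1 : ℝ) ^ (n - 1) = -1 := by
        rw [← pow_add]
        exact Odd.neg_one_pow ⟨n - 1, by omega⟩
      linear_combination (s⁻¹ * α i * β i * ∏ j ∈ Finset.univ.erase i, (β j - t)) * hodd
    rw [h3] at h2
    linarith
  -- all roots nonnegative
  have hξnn : ∀ i, 0 ≤ ξ i := by
    intro i
    by_contra h
    push_neg at h
    apply hneg (ξ i) h
    exact Finset.prod_eq_zero (Finset.mem_univ i) (by ring)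
  -- zero is a root
  have hzero : ∃ i, ξ i = 0 := by
    have h0 : ∏ i, (0 - ξ i) = 0 := by
      rw [hEt 0]
      have e1 : ∀ i : Fin n, (s⁻¹ * α i * β i) * ∏ j ∈ Finset.univ.erase i, (0 - β j)
          = - ((s⁻¹ * α i) * ∏ j, (0 - β j)) := by
        intro i
        rw [← Finset.mul_prod_erase Finset.univ (fun j => (0 : ℝ) - β j) (Finset.mem_univ i)]
        ring
      rw [Finset.sum_congr rfl fun i _ => e1 i, Finset.sum_neg_distrib, ← Finset.sum_mul,
        hsum1, one_mul]
      ring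
    obtain ⟨i, _, hi⟩ := Finset.prod_eq_zero_iff.mp h0
    exact ⟨i, by linarith [sub_eq_zero.mp ((by linarith : (0:ℝ) - ξ i = 0))]⟩
  obtain ⟨i0, hi0⟩ := hzero
  have hξ0 : ξ ⟨0, hn⟩ = 0 := by
    refine le_antisymm ?_ (hξnn _)
    have h01 : (⟨0, hn⟩ : Fin n) ≤ i0 := by simp [Fin.le_def]
    calc ξ ⟨0, hn⟩ ≤ ξ i0 := hξmono h01
      _ = 0 := hi0
  have hkey : ∀ b : ℝ, (∃ k, β k = b) →
      ((Finset.univ.filter fun i => ξ i = b).card + 1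
          = (Finset.univ.filter fun j => β j = b).card
        ∧ ((Finset.univ.filter fun i => b < ξ i).card % 2
          = (Finset.univ.filter fun j => b < β j).card % 2)) := by
    rintro b ⟨k0, hk0⟩
    obtain ⟨h1, h2⟩ := key_fact α β ξ s hs hα hβpos hE b k0 hk0
    exact ⟨h1, even_mod_aux h2⟩
  have hL1 : ∀ b : ℝ, 0 < b → 1 ≤ (Finset.univ.filter fun i => ξ i < b).card := by
    intro b hb
    exact Finset.card_pos.mpr ⟨i0, Finset.mem_filter.mpr ⟨Finset.mem_univ i0,
      by rw [hi0]; exact hb⟩⟩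
  -- upper half : Bu ≤ U
  have hU : ∀ N : ℕ, ∀ b : ℝ, (∃ k, β k = b) → (Finset.univ.filter fun j => b < β j).card = N →
      (Finset.univ.filter fun j => b < β j).card
        ≤ (Finset.univ.filter fun i => b < ξ i).card := by
    intro N
    induction N using Nat.strong_induction_on with
    | _ N IH =>
      intro b hb hN
      rcases Nat.eq_zero_or_pos N with h0 | h0
      · rw [hN, h0]; exact Nat.zero_le _
      have hTne : (Finset.univ.filter fun j => b < β j).Nonempty :=
        Finset.card_pos.mp (by omega)
      set V := (Finset.univ.filter fun j => b < β j).image β with hV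
      have hVne : V.Nonempty := hTne.image β
      set b'' := V.min' hVne with hb''def
      have hb''mem : b'' ∈ V := Finset.min'_mem V hVne
      obtain ⟨k1, hk1mem, hk1⟩ := Finset.mem_image.mp hb''mem
      have hbb'' : b < b'' := hk1 ▸ (Finset.mem_filter.mp hk1mem).2
      have hmin : ∀ j, b < β j → b'' ≤ β j := fun j hj => Finset.min'_le V _
        (Finset.mem_image.mpr ⟨j, Finset.mem_filter.mpr ⟨Finset.mem_univ j, hj⟩, rfl⟩)
      have hsplit : (Finset.univ.filter fun j => b < β j)
          = (Finset.univ.filter fun j => b'' < β j) ∪ (Finset.univ.filter fun j => β j = b'') := by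
        ext j
        simp only [Finset.mem_union, Finset.mem_filter, Finset.mem_univ, true_and]
        constructor
        · intro h
          rcases lt_or_eq_of_le (hmin j h) with h' | h'
          · exact Or.inl h'
          · exact Or.inr h'.symm
        · rintro (h | h)
          · exact lt_trans hbb'' h
          · exact h ▸ hbb''
      have hdisj : Disjoint (Finset.univ.filter fun j => b'' < β j)
          (Finset.univ.filter fun j => β j = b'') := by
        rw [Finset.disjoint_left]
        intro j h1 h2
        simp only [Finset.mem_filter, Finset.mem_univ, true_and] at h1 h2
        rw [h2] at h1
        exact lt_irrefl _ h1
      have hBu : (Finset.univ.filter fun j => b < β j).card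
          = (Finset.univ.filter fun j => b'' < β j).card
            + (Finset.univ.filter fun j => β j = b'').card := by
        rw [hsplit, Finset.card_union_of_disjoint hdisj]
      have hdisj2 : Disjoint (Finset.univ.filter fun i => b'' < ξ i)
          (Finset.univ.filter fun i => ξ i = b'') := by
        rw [Finset.disjoint_left]
        intro i h1 h2
        simp only [Finset.mem_filter, Finset.mem_univ, true_and] at h1 h2
        rw [h2] at h1
        exact lt_irrefl _ h1
      have hsub : (Finset.univ.filter fun i => b'' < ξ i) ∪ (Finset.univ.filter fun i => ξ i = b'')
          ⊆ (Finset.univ.filter fun i => b < ξ i) := by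
        intro i hi
        rcases Finset.mem_union.mp hi with h | h <;>
          simp only [Finset.mem_filter, Finset.mem_univ, true_and] at h ⊢
        · exact lt_trans hbb'' h
        · exact h ▸ hbb''
      have hUge : (Finset.univ.filter fun i => b'' < ξ i).card
          + (Finset.univ.filter fun i => ξ i = b'').card
          ≤ (Finset.univ.filter fun i => b < ξ i).card := by
        rw [← Finset.card_union_of_disjoint hdisj2]
        exact Finset.card_le_card hsub
      have hBu''lt : (Finset.univ.filter fun j => b'' < β j).card < N := by
        have h1 : 1 ≤ (Finset.univ.filter fun j => β j = b'').card :=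
          Finset.card_pos.mpr ⟨k1, Finset.mem_filter.mpr ⟨Finset.mem_univ k1, hk1⟩⟩
        omega
      have hIH := IH _ hBu''lt b'' ⟨k1, hk1⟩ rfl
      obtain ⟨hk''1, _⟩ := hkey b'' ⟨k1, hk1⟩
      obtain ⟨_, hkb2⟩ := hkey b hb
      omega
  -- lower half : Bl + 1 ≤ L
  have hLlow : ∀ N : ℕ, ∀ b : ℝ, (∃ k, β k = b) →
      (Finset.univ.filter fun j => β j < b).card = N →
      (Finset.univ.filter fun j => β j < b).card + 1
        ≤ (Finset.univ.filter fun i => ξ i < b).card := by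
    intro N
    induction N using Nat.strong_induction_on with
    | _ N IH =>
      rintro b hb hN
      obtain ⟨kb, hkb⟩ := hb
      have hbpos : 0 < b := hkb ▸ hβpos kb
      rcases Nat.eq_zero_or_pos N with h0 | h0
      · rw [hN, h0]
        exact hL1 b hbpos
      have hTne : (Finset.univ.filter fun j => β j < b).Nonempty :=
        Finset.card_pos.mp (by omega)
      set V := (Finset.univ.filter fun j => β j < b).image β with hV
      have hVne : V.Nonempty := hTne.image β
      set b' := V.max' hVne with hb'def
      have hb'mem : b' ∈ V := Finset.max'_mem V hVne
      obtain ⟨k1, hk1mem, hk1⟩ := Finset.mem_image.mp hb'mem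
      have hbb' : b' < b := hk1 ▸ (Finset.mem_filter.mp hk1mem).2
      have hmax : ∀ j, β j < b → β j ≤ b' := fun j hj => Finset.le_max' V _
        (Finset.mem_image.mpr ⟨j, Finset.mem_filter.mpr ⟨Finset.mem_univ j, hj⟩, rfl⟩)
      have hsplit : (Finset.univ.filter fun j => β j < b)
          = (Finset.univ.filter fun j => β j < b') ∪ (Finset.univ.filter fun j => β j = b') := by
        ext j
        simp only [Finset.mem_union, Finset.mem_filter, Finset.mem_univ, true_and]
        constructor
        · intro h
          rcases lt_or_eq_of_le (hmax j h) with h' | h'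
          · exact Or.inl h'
          · exact Or.inr h'
        · rintro (h | h)
          · exact lt_trans h hbb'
          · exact h ▸ hbb'
      have hdisj : Disjoint (Finset.univ.filter fun j => β j < b')
          (Finset.univ.filter fun j => β j = b') := by
        rw [Finset.disjoint_left]
        intro j h1 h2
        simp only [Finset.mem_filter, Finset.mem_univ, true_and] at h1 h2
        rw [h2] at h1
        exact lt_irrefl _ h1
      have hBl : (Finset.univ.filter fun j => β j < b).card
          = (Finset.univ.filter fun j => β j < b').card
            + (Finset.univ.filter fun j => β j = b').card := by
        rw [hsplit, Finset.card_union_of_disjoint hdisj]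
      have hdisj2 : Disjoint (Finset.univ.filter fun i => ξ i < b')
          (Finset.univ.filter fun i => ξ i = b') := by
        rw [Finset.disjoint_left]
        intro i h1 h2
        simp only [Finset.mem_filter, Finset.mem_univ, true_and] at h1 h2
        rw [h2] at h1
        exact lt_irrefl _ h1
      have hsub : (Finset.univ.filter fun i => ξ i < b') ∪ (Finset.univ.filter fun i => ξ i = b')
          ⊆ (Finset.univ.filter fun i => ξ i < b) := by
        intro i hi
        rcases Finset.mem_union.mp hi with h | h <;>
          simp only [Finset.mem_filter, Finset.mem_univ, true_and] at h ⊢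
        · exact lt_trans h hbb'
        · exact h ▸ hbb'
      have hLge : (Finset.univ.filter fun i => ξ i < b').card
          + (Finset.univ.filter fun i => ξ i = b').card
          ≤ (Finset.univ.filter fun i => ξ i < b).card := by
        rw [← Finset.card_union_of_disjoint hdisj2]
        exact Finset.card_le_card hsub
      have hBl'lt : (Finset.univ.filter fun j => β j < b').card < N := by
        have h1 : 1 ≤ (Finset.univ.filter fun j => β j = b').card :=
          Finset.card_pos.mpr ⟨k1, Finset.mem_filter.mpr ⟨Finset.mem_univ k1, hk1⟩⟩
        omega
      have hIH := IH _ hBl'lt b' ⟨k1, hk1⟩ rfl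
      obtain ⟨hk'1, _⟩ := hkey b' ⟨k1, hk1⟩
      obtain ⟨hkb1, hkb2⟩ := hkey b ⟨kb, hkb⟩
      have ht1 := tri_card ξ b
      have ht2 := tri_card β b
      have hBu := hU _ b ⟨kb, hkb⟩ rfl
      omega
  -- combined equalities
  have hfinal : ∀ b : ℝ, (∃ k, β k = b) →
      ((Finset.univ.filter fun i => ξ i < b).card
          = (Finset.univ.filter fun j => β j < b).card + 1
        ∧ (Finset.univ.filter fun i => b < ξ i).card
          = (Finset.univ.filter fun j => b < β j).card) := by
    intro b hb
    have h1 := hU _ b hb rfl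
    have h2 := hLlow _ b hb rfl
    obtain ⟨h3, _⟩ := hkey b hb
    have ht1 := tri_card ξ b
    have ht2 := tri_card β b
    omega
  refine ⟨?_, ?_, hξ0⟩
  · intro k
    by_contra hcon
    push_neg at hcon
    have h1 : Finset.Ici k ⊆ Finset.univ.filter fun i => β k < ξ i := by
      intro i hi
      exact Finset.mem_filter.mpr ⟨Finset.mem_univ i,
        lt_of_lt_of_le hcon (hξmono (Finset.mem_Ici.mp hi))⟩
    have h2 : (Finset.univ.filter fun j => β k < β j) ⊆ Finset.Ioi k := by
      intro j hj
      rw [Finset.mem_Ioi]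
      by_contra hle
      exact absurd (Finset.mem_filter.mp hj).2 (not_lt.mpr (hβmono (not_lt.mp hle)))
    have c1 := Finset.card_le_card h1
    have c2 := Finset.card_le_card h2
    rw [Fin.card_Ici] at c1
    rw [Fin.card_Ioi] at c2
    have h3 := (hfinal (β k) ⟨k, rfl⟩).2
    have := k.isLt
    omega
  · intro i j hij
    by_contra hcon
    push_neg at hcon
    have h1 : Finset.Iic j ⊆ Finset.univ.filter fun i' => ξ i' < β i := by
      intro i' hi'
      exact Finset.mem_filter.mpr ⟨Finset.mem_univ i',
        lt_of_le_of_lt (hξmono (Finset.mem_Iic.mp hi')) hcon⟩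
    have h2 : (Finset.univ.filter fun j' => β j' < β i) ⊆ Finset.Iio i := by
      intro j' hj'
      rw [Finset.mem_Iio]
      by_contra hle
      exact absurd (Finset.mem_filter.mp hj').2 (not_lt.mpr (hβmono (not_lt.mp hle)))
    have c1 := Finset.card_le_card h1
    have c2 := Finset.card_le_card h2
    rw [Fin.card_Iic] at c1
    rw [Fin.card_Iio] at c2
    have h3 := (hfinal (β i) ⟨i, rfl⟩).1
    have := j.isLt
    omega
end
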